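/- Let M be a Kimura matrix and T the lower-triangular all-ones matrix (T_{ij}=1 for i≥j). Write T^{-1} M T in block form as [[1, 0],[0, L]] with L an N×N matrix. Then the all-ones row vector is a left eigenvector of L with eigenvalue 1; that is, for every column j in {1,...,N}, sum_{i=1}^N (T^{-1} M T)_{ij} = 1. -/

import Mathlib

open Finset

/-- The lower triangular all-ones matrix `T` with `T i j = 1` for `i ≥ j`. -/
def Tmat (N : ℕ) : Matrix (Fin (N+1)) (Fin (N+1)) ℝ :=
  fun i j => if j ≤ i then 1 else 0

/-- The inverse of `T`: ones on the diagonal and `-1` on the subdiagonal. -/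
def Tinv (N : ℕ) : Matrix (Fin (N+1)) (Fin (N+1)) ℝ :=
  fun i j => if i = j then 1 else if (j : ℕ) + 1 = (i : ℕ) then -1 else 0

theorem stmt19 (N : ℕ) (M : Matrix (Fin (N+1)) (Fin (N+1)) ℝ)
    (hM0 : ∀ i j, 0 ≤ M i j) (hM1 : ∀ i, ∑ j, M i j = 1)
    (habs0 : ∀ j, M 0 j = if j = 0 then 1 else 0)
    (habsN : ∀ j, M (Fin.last N) j = if j = Fin.last N then 1 else 0) :
    ∀ j : Fin (N+1), j ≠ 0 →
      ∑ i ∈ Finset.univ.erase (0 : Fin (N+1)), (Tinv N * M * Tmat N) i j = 1 := by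
  intro j hj
  set f : Fin (N+1) → ℝ := fun i => ∑ l, if j ≤ l then M i l else 0 with hf
  -- key: entry at succ index
  have key : ∀ i₀ : Fin N, (Tinv N * M * Tmat N) (i₀.succ) j
      = f i₀.succ - f i₀.castSucc := by
    intro i₀
    have hrow : ∀ l, (Tinv N * M) i₀.succ l = M i₀.succ l - M i₀.castSucc l := by
      intro l
      rw [Matrix.mul_apply]
      have hpt : ∀ k : Fin (N+1), Tinv N i₀.succ k * M k l
          = (if i₀.succ = k then M k l else 0) + (if i₀.castSucc = k then -M k l else 0) := by
        intro k
        simp only [Tinv]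
        have h1 : ((k : ℕ) + 1 = (i₀.succ : ℕ)) ↔ i₀.castSucc = k := by
          rw [Fin.ext_iff]; simp [Fin.val_succ]; omega
        split_ifs with ha hb hc hd he
        · exfalso
          simp only [Fin.ext_iff, Fin.val_succ, Fin.coe_castSucc] at ha hb; omega
        · ring
        · ring
        · exact absurd (h1.mp hc) hd
        · exact absurd (h1.mpr he) hc
        · ring
      rw [Finset.sum_congr rfl (fun k _ => hpt k), Finset.sum_add_distrib,
        Finset.sum_ite_eq, Finset.sum_ite_eq]
      simp only [Finset.mem_univ, if_true]
      ring
    rw [Matrix.mul_apply]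
    simp only [Tmat]
    have : ∀ l : Fin (N+1), (Tinv N * M) i₀.succ l * (if j ≤ l then (1:ℝ) else 0)
        = (if j ≤ l then M i₀.succ l else 0) - (if j ≤ l then M i₀.castSucc l else 0) := by
      intro l
      rw [hrow l]
      split_ifs <;> ring
    rw [Finset.sum_congr rfl (fun l _ => this l), Finset.sum_sub_distrib]
  -- reduce erase-0 sum to sum over Fin N of succ
  rw [show (Finset.univ.erase (0 : Fin (N+1))) = Finset.univ.image Fin.succ by
    ext x
    simp [Finset.mem_image, Fin.exists_succ_eq, eq_comm]]
  rw [Finset.sum_image (by intro a _ b _ h; exact Fin.succ_injective _ h)]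
  rw [Finset.sum_congr rfl (fun i _ => key i)]
  -- telescoping
  set g : ℕ → ℝ := fun n => f ⟨n % (N+1), Nat.mod_lt _ (Nat.succ_pos N)⟩ with hg
  have hsucc : ∀ i : Fin N, f i.succ = g ((i:ℕ)+1) := by
    intro i
    congr 1
    exact Fin.ext (by simp [Nat.mod_eq_of_lt (Nat.succ_lt_succ i.isLt)])
  have hcast : ∀ i : Fin N, f i.castSucc = g (i:ℕ) := by
    intro i
    congr 1
    exact Fin.ext (by simp [Nat.mod_eq_of_lt (Nat.lt_succ_of_lt i.isLt)])
  have : ∑ i : Fin N, (f i.succ - f i.castSucc) = ∑ i : Fin N, (g ((i:ℕ)+1) - g (i:ℕ)) := by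
    exact Finset.sum_congr rfl (fun i _ => by rw [hsucc, hcast])
  rw [this, Fin.sum_univ_eq_sum_range (fun n => g (n+1) - g n), Finset.sum_range_sub]
  have hN : g N = f (Fin.last N) := by
    have he : (⟨N % (N+1), Nat.mod_lt _ (Nat.succ_pos N)⟩ : Fin (N+1)) = Fin.last N :=
      Fin.ext (Nat.mod_eq_of_lt (Nat.lt_succ_self N))
    simp only [hg, he]
  have h0 : g 0 = f 0 := by congr 1
  rw [hN, h0]
  have hfN : f (Fin.last N) = 1 := by
    simp only [hf, habsN]
    rw [Finset.sum_eq_single (Fin.last N)]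
    · simp [Fin.le_last]
    · intro b _ hb; simp [hb]
    · simp
  have hf0 : f 0 = 0 := by
    simp only [hf, habs0]
    apply Finset.sum_eq_zero
    intro l _
    split_ifs with h1 h2
    · exact absurd (Fin.le_zero_iff.mp (h2 ▸ h1)) hj
    · rfl
    · rfl
  rw [hfN, hf0]; ring
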